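/- Let v > 0 and α be fixed reals, and let φ : ℝ × ℝ → ℝ be three times continuously differentiable with ∂_t φ + v·∂_x φ = 0 everywhere. Fix (x, t) ∈ ℝ², and for h, τ > 0 set C = vτ/h and define the scheme residual R(h, τ) = φ(x, t+τ) − φ(x, t) + C·(φ(x, t+τ) − φ(x−h, t+τ)) − (C/2)·(α·(φ(x−h, t+τ) − φ(x−2h, t+τ)) + (1−α)·(φ(x, t+τ) − φ(x−h, t+τ))) + (C/2)·(α·(φ(x, t) − φ(x−h, t)) + (1−α)·(φ(x+h, t) − φ(x, t))). Then R(h, τ) = O((|h| + |τ|)³) as (h, τ) → (0, 0) with h, τ > 0; that is, the parametric semi-implicit scheme is second-order consistent for every value of the parameter α. -/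

import Mathlib

open Asymptotics Filter Set

private lemma abs_le_of_uIcc {u w : ℝ} (hw : w ∈ Set.uIcc 0 u) : |w| ≤ |u| := by
  rcases le_total 0 u with hu | hu
  · rw [Set.uIcc_of_le hu] at hw
    rw [abs_of_nonneg hw.1, abs_of_nonneg hu]; exact hw.2
  · rw [Set.uIcc_of_ge hu] at hw
    rw [abs_of_nonpos hw.2, abs_of_nonpos hu]; exact neg_le_neg hw.1

private lemma abs_add_le' {X Y BX BY : ℝ} (hX : |X| ≤ BX) (hY : |Y| ≤ BY) :
    |X + Y| ≤ BX + BY := (abs_add_le X Y).trans (add_le_add hX hY)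

private lemma taylor_bound_aux {f : ℝ → ℝ} (hf : ContDiff ℝ 3 f) (x : ℝ) :
    ∃ M : ℝ, 0 ≤ M ∧ ∀ a b : ℝ, |a - x| ≤ 1 → |b - a| ≤ 1 →
      |deriv (deriv f) b - deriv (deriv f) a| ≤ M * |b - a| ∧
      |deriv f b - deriv f a - deriv (deriv f) a * (b - a)| ≤ M * (b - a) ^ 2 ∧
      |f b - f a - deriv f a * (b - a) - deriv (deriv f) a * (b - a) ^ 2 / 2|
        ≤ M * |b - a| ^ 3 := by
  have hf' : ContDiff ℝ ((2 : WithTop ℕ∞) + 1) f := by norm_num; exact hf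
  have h1 := contDiff_succ_iff_deriv.mp hf'
  have hdf : Differentiable ℝ f := h1.1
  have hf2 : ContDiff ℝ ((1 : WithTop ℕ∞) + 1) (deriv f) := by norm_num; exact h1.2.2
  have h2 := contDiff_succ_iff_deriv.mp hf2
  have hd1 : Differentiable ℝ (deriv f) := h2.1
  have h3 := contDiff_one_iff_deriv.mp h2.2.2
  have hd2 : Differentiable ℝ (deriv (deriv f)) := h3.1
  have hc3 : Continuous (deriv (deriv (deriv f))) := h3.2
  obtain ⟨M₀, hM₀⟩ := (isCompact_Icc (a := x - 2) (b := x + 2)).exists_bound_of_continuousOn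
    hc3.continuousOn
  refine ⟨max M₀ 0, le_max_right _ _, ?_⟩
  set M := max M₀ 0 with hM_def
  have hMb : ∀ y ∈ Icc (x - 2) (x + 2), ‖deriv (deriv (deriv f)) y‖ ≤ M :=
    fun y hy => (hM₀ y hy).trans (le_max_left _ _)
  have hM : 0 ≤ M := le_max_right _ _
  have lip : ∀ a b : ℝ, a ∈ Icc (x - 2) (x + 2) → b ∈ Icc (x - 2) (x + 2) →
      |deriv (deriv f) b - deriv (deriv f) a| ≤ M * |b - a| := by
    intro a b ha hb
    have := (convex_Icc (x - 2) (x + 2)).norm_image_sub_le_of_norm_deriv_le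
      (fun y _ => hd2 y) hMb ha hb
    simpa [Real.norm_eq_abs] using this
  intro a b ha hb
  have haI : a ∈ Icc (x - 2) (x + 2) := by
    have h1 := abs_le.mp ha
    rw [mem_Icc]; constructor <;> linarith [h1.1, h1.2]
  have hmem : ∀ w : ℝ, |w| ≤ 1 → a + w ∈ Icc (x - 2) (x + 2) := by
    intro w hw
    have h1 := abs_le.mp ha; have h2 := abs_le.mp hw
    rw [mem_Icc]; constructor <;> linarith [h1.1, h1.2, h2.1, h2.2]
  have p2 : ∀ w : ℝ, |w| ≤ 1 →
      |deriv f (a + w) - deriv f a - deriv (deriv f) a * w| ≤ M * w ^ 2 := by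
    intro w hw
    set g : ℝ → ℝ := fun w => deriv f (a + w) - deriv f a - deriv (deriv f) a * w with hg_def
    have hg : ∀ w : ℝ, HasDerivAt g (deriv (deriv f) (a + w) - deriv (deriv f) a) w := by
      intro w
      have hc : HasDerivAt (fun w : ℝ => a + w) 1 w := (hasDerivAt_id w).const_add a
      have hcomp : HasDerivAt (fun w => deriv f (a + w)) (deriv (deriv f) (a + w) * 1) w :=
        ((hd1 (a + w)).hasDerivAt).comp w hc
      have := (hcomp.sub_const (deriv f a)).sub
        ((hasDerivAt_id w).const_mul (deriv (deriv f) a))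
      simp only [mul_one] at this
      exact this
    have key := (convex_uIcc 0 w).norm_image_sub_le_of_norm_deriv_le
      (fun y _ => (hg y).differentiableAt)
      (fun y hy => by
        rw [(hg y).deriv]
        have hy1 : |y| ≤ |w| := abs_le_of_uIcc hy
        calc ‖deriv (deriv f) (a + y) - deriv (deriv f) a‖
            ≤ M * |a + y - a| := lip a (a + y) haI (hmem y (hy1.trans hw))
          _ = M * |y| := by ring_nf
          _ ≤ M * |w| := by gcongr)
      Set.left_mem_uIcc Set.right_mem_uIcc
    have hg0 : g 0 = 0 := by simp [hg_def]
    rw [hg0, sub_zero, sub_zero, Real.norm_eq_abs, Real.norm_eq_abs] at key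
    calc |g w| ≤ M * |w| * |w| := key
      _ = M * (w * w) := by rw [mul_assoc, abs_mul_abs_self]
      _ = M * w ^ 2 := by ring
  have p3 : ∀ w : ℝ, |w| ≤ 1 →
      |f (a + w) - f a - deriv f a * w - deriv (deriv f) a * w ^ 2 / 2| ≤ M * |w| ^ 3 := by
    intro w hw
    set g : ℝ → ℝ := fun w => f (a + w) - f a - deriv f a * w - deriv (deriv f) a * w ^ 2 / 2
      with hg_def
    have hg : ∀ w : ℝ, HasDerivAt g
        (deriv f (a + w) - deriv f a - deriv (deriv f) a * w) w := by
      intro w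
      have hc : HasDerivAt (fun w : ℝ => a + w) 1 w := (hasDerivAt_id w).const_add a
      have hcomp : HasDerivAt (fun w => f (a + w)) (deriv f (a + w) * 1) w :=
        ((hdf (a + w)).hasDerivAt).comp w hc
      have hsq : HasDerivAt (fun w : ℝ => deriv (deriv f) a * w ^ 2 / 2)
          (deriv (deriv f) a * w) w := by
        have := ((hasDerivAt_pow 2 w).const_mul (deriv (deriv f) a)).div_const 2
        simpa using this.congr_deriv (by push_cast; ring)
      have := ((hcomp.sub_const (f a)).sub
        ((hasDerivAt_id w).const_mul (deriv f a))).sub hsq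
      simp only [mul_one] at this
      exact this
    have key := (convex_uIcc 0 w).norm_image_sub_le_of_norm_deriv_le
      (fun y _ => (hg y).differentiableAt)
      (fun y hy => by
        rw [(hg y).deriv]
        have hy1 : |y| ≤ |w| := abs_le_of_uIcc hy
        calc ‖deriv f (a + y) - deriv f a - deriv (deriv f) a * y‖
            ≤ M * y ^ 2 := p2 y (hy1.trans hw)
          _ ≤ M * w ^ 2 := by
              have hsq : y ^ 2 ≤ w ^ 2 := by
                rw [← sq_abs y, ← sq_abs w]; gcongr
              gcongr)
      Set.left_mem_uIcc Set.right_mem_uIcc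
    have hg0 : g 0 = 0 := by simp [hg_def]
    rw [hg0, sub_zero, sub_zero, Real.norm_eq_abs, Real.norm_eq_abs] at key
    calc |g w| ≤ M * w ^ 2 * |w| := key
      _ = M * |w| ^ 3 := by rw [← sq_abs w]; ring
  have e : a + (b - a) = b := by ring
  refine ⟨?_, ?_, ?_⟩
  · have hbI : b ∈ Icc (x - 2) (x + 2) := by have := hmem (b - a) hb; rwa [e] at this
    exact lip a b haI hbI
  · have := p2 (b - a) hb; rwa [e] at this
  · have := p3 (b - a) hb; rwa [e] at this

set_option maxHeartbeats 1600000 in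
/-- Second-order consistency of the parametric semi-implicit scheme: for a
smooth solution of `∂ₜφ + v∂ₓφ = 0` with constant `v > 0`, Courant number
`C = vτ/h`, and any parameter `α`, the scheme residual at a fixed point
`(x, t)` is `O((|h| + |τ|)³)` as `(h, τ) → (0, 0)` with `h, τ > 0`. -/
theorem semi_implicit_second_order_consistency
    (v α : ℝ) (hv : 0 < v) (φ : ℝ × ℝ → ℝ) (hφ : ContDiff ℝ 3 φ)
    (hpde : ∀ x t : ℝ,
      deriv (fun s => φ (x, s)) t + v * deriv (fun u => φ (u, t)) x = 0)
    (x t : ℝ) :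
    (fun p : ℝ × ℝ =>
        φ (x, t + p.2) - φ (x, t) +
          (v * p.2 / p.1) * (φ (x, t + p.2) - φ (x - p.1, t + p.2)) -
          (v * p.2 / p.1 / 2) *
            (α * (φ (x - p.1, t + p.2) - φ (x - 2 * p.1, t + p.2)) +
              (1 - α) * (φ (x, t + p.2) - φ (x - p.1, t + p.2))) +
          (v * p.2 / p.1 / 2) *
            (α * (φ (x, t) - φ (x - p.1, t)) +
              (1 - α) * (φ (x + p.1, t) - φ (x, t))))
      =O[nhdsWithin (0, 0) {p : ℝ × ℝ | 0 < p.1 ∧ 0 < p.2}]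
      (fun p : ℝ × ℝ => (|p.1| + |p.2|) ^ 3) := by
  -- the profile function
  set f : ℝ → ℝ := fun y => φ (y, t) with hf_def
  have hfC : ContDiff ℝ 3 f := hφ.comp (contDiff_id.prodMk contDiff_const)
  have hdφ : Differentiable ℝ φ := hφ.differentiable (by norm_num)
  have hzero : ∀ x' t' : ℝ, (fderiv ℝ φ (x', t')) (v, 1) = 0 := by
    intro x' t'
    have hx' : HasDerivAt (fun u => φ (u, t')) ((fderiv ℝ φ (x', t')) (1, 0)) x' :=
      (hdφ (x', t')).hasFDerivAt.comp_hasDerivAt x'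
        ((hasDerivAt_id x').prodMk (hasDerivAt_const x' t'))
    have ht' : HasDerivAt (fun s => φ (x', s)) ((fderiv ℝ φ (x', t')) (0, 1)) t' :=
      (hdφ (x', t')).hasFDerivAt.comp_hasDerivAt t'
        ((hasDerivAt_const t' x').prodMk (hasDerivAt_id t'))
    have hp := hpde x' t'
    rw [ht'.deriv, hx'.deriv] at hp
    have hsplit : ((v, 1) : ℝ × ℝ) = v • ((1, 0) : ℝ × ℝ) + (0, 1) := by
      simp [Prod.ext_iff]
    rw [hsplit, map_add, map_smul, smul_eq_mul]
    linarith
  have hkey : ∀ a b : ℝ, φ (a, b) = f (a - v * (b - t)) := by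
    intro a b
    have hgd : ∀ r : ℝ, HasDerivAt (fun r : ℝ => φ (a - v * (b - t) + v * r, t + r)) 0 r := by
      intro r
      have hc : HasDerivAt (fun r : ℝ => (a - v * (b - t) + v * r, t + r))
          ((v, 1) : ℝ × ℝ) r := by
        have h1 : HasDerivAt (fun r : ℝ => a - v * (b - t) + v * r) v r := by
          simpa using ((hasDerivAt_id r).const_mul v).const_add (a - v * (b - t))
        exact h1.prodMk ((hasDerivAt_id r).const_add t)
      have hcd := (hdφ _).hasFDerivAt.comp_hasDerivAt r hc
      rwa [hzero] at hcd
    have hconst := is_const_of_deriv_eq_zero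
      (f := fun r : ℝ => φ (a - v * (b - t) + v * r, t + r))
      (fun r => (hgd r).differentiableAt) (fun r => (hgd r).deriv) (b - t) 0
    simp only [mul_zero, add_zero] at hconst
    rw [show a - v * (b - t) + v * (b - t) = a from by ring,
      show t + (b - t) = b from by ring] at hconst
    exact hconst
  obtain ⟨M, hM0, hTay⟩ := taylor_bound_aux hfC x
  set d1 := deriv f with hd1_def
  set d2 := deriv d1 with hd2_def
  -- constants
  set A := 1 + |α| + |1 - α| with hA_def
  have hA0 : 0 < A := by positivity
  have h1A : 1 ≤ A := by
    rw [hA_def]; linarith [abs_nonneg α, abs_nonneg (1 - α)]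
  have hαA : |α| ≤ A := by
    rw [hA_def]; linarith [abs_nonneg α, abs_nonneg (1 - α)]
  have h1αA : |1 - α| ≤ A := by
    rw [hA_def]; linarith [abs_nonneg α, abs_nonneg (1 - α)]
  set c : ℝ := 14 * A * (M * (v * (1 + v) ^ 2)) with hc_def
  set δ : ℝ := 1 / (4 * (1 + v)) with hδ_def
  have hδ0 : 0 < δ := by rw [hδ_def]; positivity
  rw [Asymptotics.isBigO_iff]
  refine ⟨c, ?_⟩
  filter_upwards [nhdsWithin_le_nhds (Metric.ball_mem_nhds ((0, 0) : ℝ × ℝ) hδ0),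
    self_mem_nhdsWithin] with p hball hpos
  obtain ⟨h, τ⟩ := p
  simp only [Set.mem_setOf_eq] at hpos
  obtain ⟨hh0, hτ0⟩ := hpos
  dsimp only at hball hh0 hτ0 ⊢
  have hdist := Metric.mem_ball.mp hball
  have hhδ : h < δ := by
    have h1 : dist h (0 : ℝ) ≤ dist ((h, τ) : ℝ × ℝ) (0, 0) := by
      rw [Prod.dist_eq]; exact le_max_left _ _
    rw [Real.dist_eq, sub_zero] at h1
    have := h1.trans_lt hdist
    rwa [abs_of_pos hh0] at this
  have hτδ : τ < δ := by
    have h1 : dist τ (0 : ℝ) ≤ dist ((h, τ) : ℝ × ℝ) (0, 0) := by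
      rw [Prod.dist_eq]; exact le_max_right _ _
    rw [Real.dist_eq, sub_zero] at h1
    have := h1.trans_lt hdist
    rwa [abs_of_pos hτ0] at this
  set s : ℝ := v * τ with hs_def
  have hs0 : 0 < s := by rw [hs_def]; positivity
  clear_value f d1 d2 A c δ s
  have hδ4 : δ ≤ 1 / 4 := by
    rw [hδ_def]
    rw [div_le_div_iff₀ (by positivity) (by norm_num)]
    nlinarith
  have hh4 : h ≤ 1 / 4 := le_of_lt (hhδ.trans_le hδ4)
  have hs4 : s ≤ 1 / 4 := by
    have h1 : s < v * δ := by rw [hs_def]; exact mul_lt_mul_of_pos_left hτδ hv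
    have h2 : v * δ ≤ 1 / 4 := by
      rw [hδ_def, mul_one_div, div_le_div_iff₀ (by positivity) (by norm_num)]
      nlinarith
    linarith
  have hhs1 : h + s ≤ 1 / 2 := by linarith
  have hkeyineq : s * (h + s) ^ 2 ≤ v * (1 + v) ^ 2 * (h + τ) ^ 3 := by
    have k1 : h + s ≤ (1 + v) * (h + τ) := by
      rw [hs_def]
      have : (1 + v) * (h + τ) - (h + v * τ) = τ + v * h := by ring
      nlinarith [mul_nonneg hv.le hh0.le]
    have k2 : s * (h + s) ^ 2 ≤ s * ((1 + v) * (h + τ)) ^ 2 :=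
      mul_le_mul_of_nonneg_left (pow_le_pow_left₀ (by linarith) k1 2) hs0.le
    have k3 : s * ((1 + v) * (h + τ)) ^ 2 = v * (1 + v) ^ 2 * (τ * (h + τ) ^ 2) := by
      rw [hs_def]; ring
    have k4 : τ * (h + τ) ^ 2 ≤ (h + τ) * (h + τ) ^ 2 :=
      mul_le_mul_of_nonneg_right (by linarith) (sq_nonneg (h + τ))
    have k5 : v * (1 + v) ^ 2 * (τ * (h + τ) ^ 2) ≤ v * (1 + v) ^ 2 * ((h + τ) * (h + τ) ^ 2) :=
      mul_le_mul_of_nonneg_left k4 (by positivity)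
    calc s * (h + s) ^ 2 ≤ s * ((1 + v) * (h + τ)) ^ 2 := k2
      _ = v * (1 + v) ^ 2 * (τ * (h + τ) ^ 2) := k3
      _ ≤ v * (1 + v) ^ 2 * ((h + τ) * (h + τ) ^ 2) := k5
      _ = v * (1 + v) ^ 2 * (h + τ) ^ 3 := by ring
  -- generic Taylor consequences
  have hq : ∀ a : ℝ, |a - x| ≤ 1 →
      |f (a - h) - f a + d1 a * h - d2 a * h ^ 2 / 2| ≤ M * h ^ 3 := by
    intro a ha
    have e : a - h - a = -h := by ring
    have hcond : |a - h - a| ≤ 1 := by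
      rw [e, abs_neg, abs_of_pos hh0]; linarith
    have h1 := (hTay a (a - h) ha hcond).2.2
    rw [e] at h1
    rw [show f (a - h) - f a - d1 a * (-h) - d2 a * (-h) ^ 2 / 2
        = f (a - h) - f a + d1 a * h - d2 a * h ^ 2 / 2 from by ring,
      abs_neg, abs_of_pos hh0] at h1
    exact h1
  have hr : ∀ b : ℝ, |b - x| ≤ 1 → |d1 b - d1 x - d2 x * (b - x)| ≤ M * (b - x) ^ 2 :=
    fun b hb => (hTay x b (by simp) hb).2.1
  have hw : ∀ b : ℝ, |b - x| ≤ 1 → |d2 b - d2 x| ≤ M * |b - x| :=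
    fun b hb => (hTay x b (by simp) hb).1
  -- base point conditions
  have hc1 : |x - s - x| ≤ 1 := by
    rw [show x - s - x = -s from by ring, abs_neg, abs_of_pos hs0]; linarith
  have hc2 : |x - h - s - x| ≤ 1 := by
    rw [show x - h - s - x = -(h + s) from by ring, abs_neg, abs_of_pos (by linarith)]
    linarith
  have hc3 : |x + h - x| ≤ 1 := by
    rw [show x + h - x = h from by ring, abs_of_pos hh0]; linarith
  have hc0 : |x - x| ≤ (1 : ℝ) := by simp
  -- the atoms
  obtain ⟨T, hTd⟩ : ∃ r : ℝ, r = f (x - s) - f x + d1 x * s - d2 x * s ^ 2 / 2 := ⟨_, rfl⟩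
  obtain ⟨q1, hq1d⟩ : ∃ r : ℝ,
    r = f (x - h - s) - f (x - s) + d1 (x - s) * h - d2 (x - s) * h ^ 2 / 2 := ⟨_, rfl⟩
  obtain ⟨q2, hq2d⟩ : ∃ r : ℝ,
    r = f (x - 2 * h - s) - f (x - h - s) + d1 (x - h - s) * h - d2 (x - h - s) * h ^ 2 / 2 :=
    ⟨_, rfl⟩
  obtain ⟨q3, hq3d⟩ : ∃ r : ℝ,
    r = f (x - h) - f x + d1 x * h - d2 x * h ^ 2 / 2 := ⟨_, rfl⟩
  obtain ⟨q4, hq4d⟩ : ∃ r : ℝ,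
    r = f x - f (x + h) + d1 (x + h) * h - d2 (x + h) * h ^ 2 / 2 := ⟨_, rfl⟩
  obtain ⟨r1, hr1d⟩ : ∃ r : ℝ, r = d1 (x - s) - d1 x + d2 x * s := ⟨_, rfl⟩
  obtain ⟨r2, hr2d⟩ : ∃ r : ℝ, r = d1 (x - h - s) - d1 x + d2 x * (h + s) := ⟨_, rfl⟩
  obtain ⟨r3, hr3d⟩ : ∃ r : ℝ, r = d1 (x + h) - d1 x - d2 x * h := ⟨_, rfl⟩
  obtain ⟨w1, hw1d⟩ : ∃ r : ℝ, r = d2 (x - s) - d2 x := ⟨_, rfl⟩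
  obtain ⟨w2, hw2d⟩ : ∃ r : ℝ, r = d2 (x - h - s) - d2 x := ⟨_, rfl⟩
  obtain ⟨w3, hw3d⟩ : ∃ r : ℝ, r = d2 (x + h) - d2 x := ⟨_, rfl⟩
  -- atom bounds
  have hTb : |T| ≤ M * s ^ 3 := by
    have h1 := hTay x (x - s) hc0 hc1
    have h2 := h1.2.2
    rw [show x - s - x = -s from by ring] at h2
    rw [show f (x - s) - f x - d1 x * (-s) - d2 x * (-s) ^ 2 / 2
        = f (x - s) - f x + d1 x * s - d2 x * s ^ 2 / 2 from by ring,
      abs_neg, abs_of_pos hs0] at h2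
    rw [hTd]; exact h2
  have hq1b : |q1| ≤ M * h ^ 3 := by
    have h1 := hq (x - s) hc1
    rw [show x - s - h = x - h - s from by ring] at h1
    rw [hq1d]; exact h1
  have hq2b : |q2| ≤ M * h ^ 3 := by
    have h1 := hq (x - h - s) hc2
    rw [show x - h - s - h = x - 2 * h - s from by ring] at h1
    rw [hq2d]; exact h1
  have hq3b : |q3| ≤ M * h ^ 3 := by
    have h1 := hq x hc0
    rw [hq3d]; exact h1
  have hq4b : |q4| ≤ M * h ^ 3 := by
    have h1 := hq (x + h) hc3
    rw [show x + h - h = x from by ring] at h1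
    rw [hq4d]; exact h1
  have hsq2 : s ^ 2 ≤ (h + s) ^ 2 := pow_le_pow_left₀ hs0.le (by linarith) 2
  have hhq2 : h ^ 2 ≤ (h + s) ^ 2 := pow_le_pow_left₀ hh0.le (by linarith) 2
  have hr1b : |r1| ≤ M * (h + s) ^ 2 := by
    have h1 := hr (x - s) hc1
    rw [show x - s - x = -s from by ring] at h1
    rw [show d1 (x - s) - d1 x - d2 x * (-s) = d1 (x - s) - d1 x + d2 x * s from by ring,
      show ((-s : ℝ)) ^ 2 = s ^ 2 from by ring] at h1
    rw [hr1d]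
    exact h1.trans (mul_le_mul_of_nonneg_left hsq2 hM0)
  have hr2b : |r2| ≤ M * (h + s) ^ 2 := by
    have h1 := hr (x - h - s) hc2
    rw [show x - h - s - x = -(h + s) from by ring] at h1
    rw [show d1 (x - h - s) - d1 x - d2 x * (-(h + s))
        = d1 (x - h - s) - d1 x + d2 x * (h + s) from by ring,
      show ((-(h + s) : ℝ)) ^ 2 = (h + s) ^ 2 from by ring] at h1
    rw [hr2d]; exact h1
  have hr3b : |r3| ≤ M * (h + s) ^ 2 := by
    have h1 := hr (x + h) hc3
    rw [show x + h - x = h from by ring] at h1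
    rw [hr3d]
    exact h1.trans (mul_le_mul_of_nonneg_left hhq2 hM0)
  have hw1b : |w1| ≤ M * (h + s) := by
    have h1 := hw (x - s) hc1
    rw [show x - s - x = -s from by ring, abs_neg, abs_of_pos hs0] at h1
    rw [hw1d]
    exact h1.trans (mul_le_mul_of_nonneg_left (by linarith) hM0)
  have hw2b : |w2| ≤ M * (h + s) := by
    have h1 := hw (x - h - s) hc2
    rw [show x - h - s - x = -(h + s) from by ring, abs_neg,
      abs_of_pos (by linarith : (0:ℝ) < h + s)] at h1
    rw [hw2d]; exact h1
  have hw3b : |w3| ≤ M * (h + s) := by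
    have h1 := hw (x + h) hc3
    rw [show x + h - x = h from by ring, abs_of_pos hh0] at h1
    rw [hw3d]
    exact h1.trans (mul_le_mul_of_nonneg_left (by linarith) hM0)
  -- family bounds
  have famQ : ∀ co q : ℝ, |co| ≤ s / h * A → |q| ≤ M * h ^ 3 →
      |co * q| ≤ A * (M * (s * (h + s) ^ 2)) := by
    intro co q hco hqb
    rw [abs_mul]
    calc |co| * |q| ≤ s / h * A * (M * h ^ 3) :=
          mul_le_mul hco hqb (abs_nonneg q) (by positivity)
      _ = A * (M * (s * h ^ 2)) * (h / h) := by ring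
      _ = A * (M * (s * h ^ 2)) := by rw [div_self hh0.ne', mul_one]
      _ ≤ A * (M * (s * (h + s) ^ 2)) := by gcongr
  have famR : ∀ co q : ℝ, |co| ≤ s * A → |q| ≤ M * (h + s) ^ 2 →
      |co * q| ≤ A * (M * (s * (h + s) ^ 2)) := by
    intro co q hco hqb
    rw [abs_mul]
    calc |co| * |q| ≤ s * A * (M * (h + s) ^ 2) :=
          mul_le_mul hco hqb (abs_nonneg q) (by positivity)
      _ = A * (M * (s * (h + s) ^ 2)) := by ring
  have famW : ∀ co q : ℝ, |co| ≤ s * h * A → |q| ≤ M * (h + s) →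
      |co * q| ≤ A * (M * (s * (h + s) ^ 2)) := by
    intro co q hco hqb
    rw [abs_mul]
    calc |co| * |q| ≤ s * h * A * (M * (h + s)) :=
          mul_le_mul hco hqb (abs_nonneg q) (by positivity)
      _ = A * (M * (s * (h * (h + s)))) := by ring
      _ ≤ A * (M * (s * ((h + s) * (h + s)))) := by gcongr <;> linarith
      _ = A * (M * (s * (h + s) ^ 2)) := by ring
  -- coefficient bounds
  have hdiv2 : s / (2 * h) ≤ s / h := by
    rw [div_le_div_iff₀ (by positivity) (by positivity)]
    linarith [mul_nonneg hs0.le hh0.le]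
  have hco1 : |(-(s / h))| ≤ s / h * A := by
    rw [abs_neg, abs_of_nonneg (by positivity)]
    exact le_mul_of_one_le_right (by positivity) h1A
  have hco2 : |s / (2 * h) * α| ≤ s / h * A := by
    rw [abs_mul, abs_of_nonneg (show (0:ℝ) ≤ s / (2 * h) by positivity)]
    exact mul_le_mul hdiv2 hαA (abs_nonneg α) (by positivity)
  have hco3 : |s / (2 * h) * (1 - α)| ≤ s / h * A := by
    rw [abs_mul, abs_of_nonneg (show (0:ℝ) ≤ s / (2 * h) by positivity)]
    exact mul_le_mul hdiv2 h1αA (abs_nonneg _) (by positivity)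
  have hco4 : |(-(s / (2 * h) * α))| ≤ s / h * A := by rw [abs_neg]; exact hco2
  have hco5 : |(-(s / (2 * h) * (1 - α)))| ≤ s / h * A := by rw [abs_neg]; exact hco3
  have hco6 : |s| ≤ s * A := by
    rw [abs_of_pos hs0]; exact le_mul_of_one_le_right hs0.le h1A
  have hsA : 0 ≤ s * A := by positivity
  have hco7 : |(-(s * α / 2))| ≤ s * A := by
    rw [abs_neg, abs_div, abs_mul, abs_of_pos hs0, abs_two]
    have h1 : s * |α| ≤ s * A := mul_le_mul_of_nonneg_left hαA hs0.le
    linarith [mul_nonneg hs0.le (abs_nonneg α)]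
  have hco8 : |(-(s * (1 - α) / 2))| ≤ s * A := by
    rw [abs_neg, abs_div, abs_mul, abs_of_pos hs0, abs_two]
    have h1 : s * |1 - α| ≤ s * A := mul_le_mul_of_nonneg_left h1αA hs0.le
    linarith [mul_nonneg hs0.le (abs_nonneg (1 - α))]
  have hco9 : |s * (1 - α) / 2| ≤ s * A := by
    rw [abs_div, abs_mul, abs_of_pos hs0, abs_two]
    have h1 : s * |1 - α| ≤ s * A := mul_le_mul_of_nonneg_left h1αA hs0.le
    linarith [mul_nonneg hs0.le (abs_nonneg (1 - α))]
  have hshA : 0 ≤ s * h * A := by positivity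
  have hco10 : |(-(s * h / 2))| ≤ s * h * A := by
    rw [abs_neg, abs_div, abs_mul, abs_of_pos hs0, abs_of_pos hh0, abs_two]
    have h1 : s * h ≤ s * h * A := le_mul_of_one_le_right (by positivity) h1A
    linarith [mul_pos hs0 hh0]
  have hco11 : |s * h * α / 4| ≤ s * h * A := by
    rw [abs_div, abs_mul, abs_mul, abs_of_pos hs0, abs_of_pos hh0]
    have h1 : s * h * |α| ≤ s * h * A := mul_le_mul_of_nonneg_left hαA (by positivity)
    have h2 : |(4:ℝ)| = 4 := by norm_num
    rw [h2]
    linarith [mul_nonneg (mul_nonneg hs0.le hh0.le) (abs_nonneg α)]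
  have hco12 : |s * h * (1 - α) / 4| ≤ s * h * A := by
    rw [abs_div, abs_mul, abs_mul, abs_of_pos hs0, abs_of_pos hh0]
    have h1 : s * h * |1 - α| ≤ s * h * A := mul_le_mul_of_nonneg_left h1αA (by positivity)
    have h2 : |(4:ℝ)| = 4 := by norm_num
    rw [h2]
    linarith [mul_nonneg (mul_nonneg hs0.le hh0.le) (abs_nonneg (1 - α))]
  have hco13 : |(-(s * h * (1 - α) / 4))| ≤ s * h * A := by rw [abs_neg]; exact hco12
  -- per-term bounds
  have b0 : |T| ≤ A * (M * (s * (h + s) ^ 2)) := by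
    calc |T| ≤ M * s ^ 3 := hTb
      _ = 1 * (M * (s * s ^ 2)) := by ring
      _ ≤ A * (M * (s * (h + s) ^ 2)) := by gcongr
  have b1 := famQ _ q1 hco1 hq1b
  have b2 := famQ _ q2 hco2 hq2b
  have b3 := famQ _ q1 hco3 hq1b
  have b4 := famQ _ q3 hco4 hq3b
  have b5 := famQ _ q4 hco5 hq4b
  have b6 := famR _ r1 hco6 hr1b
  have b7 := famR _ r2 hco7 hr2b
  have b8 := famR _ r1 hco8 hr1b
  have b9 := famR _ r3 hco9 hr3b
  have b10 := famW _ w1 hco10 hw1b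
  have b11 := famW _ w2 hco11 hw2b
  have b12 := famW _ w1 hco12 hw1b
  have b13 := famW _ w3 hco13 hw3b
  -- rewrite the residual via the profile function
  have e1 : φ (x, t + τ) = f (x - s) := by
    rw [hkey x (t + τ)]; congr 1; rw [hs_def]; ring
  have e2 : φ (x, t) = f x := by
    rw [hkey x t]; congr 1; ring
  have e3 : φ (x - h, t + τ) = f (x - h - s) := by
    rw [hkey (x - h) (t + τ)]; congr 1; rw [hs_def]; ring
  have e4 : φ (x - 2 * h, t + τ) = f (x - 2 * h - s) := by
    rw [hkey (x - 2 * h) (t + τ)]; congr 1; rw [hs_def]; ring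
  have e5 : φ (x - h, t) = f (x - h) := by
    rw [hkey (x - h) t]; congr 1; ring
  have e6 : φ (x + h, t) = f (x + h) := by
    rw [hkey (x + h) t]; congr 1; ring
  rw [e1, e2, e3, e4, e5, e6]
  -- the algebraic decomposition
  have hid : f (x - s) - f x + s / h * (f (x - s) - f (x - h - s)) -
      s / h / 2 * (α * (f (x - h - s) - f (x - 2 * h - s)) +
        (1 - α) * (f (x - s) - f (x - h - s))) +
      s / h / 2 * (α * (f x - f (x - h)) + (1 - α) * (f (x + h) - f x))
      = T + (-(s / h)) * q1 + (s / (2 * h) * α) * q2 + (s / (2 * h) * (1 - α)) * q1 +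
        (-(s / (2 * h) * α)) * q3 + (-(s / (2 * h) * (1 - α))) * q4 +
        s * r1 + (-(s * α / 2)) * r2 + (-(s * (1 - α) / 2)) * r1 + (s * (1 - α) / 2) * r3 +
        (-(s * h / 2)) * w1 + (s * h * α / 4) * w2 + (s * h * (1 - α) / 4) * w1 +
        (-(s * h * (1 - α) / 4)) * w3 := by
    rw [hTd, hq1d, hq2d, hq3d, hq4d, hr1d, hr2d, hr3d, hw1d, hw2d, hw3d]
    field_simp
    ring
  -- sum up
  have c1 := abs_add_le' b0 b1
  have c2 := abs_add_le' c1 b2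
  have c3 := abs_add_le' c2 b3
  have c4 := abs_add_le' c3 b4
  have c5 := abs_add_le' c4 b5
  have c6 := abs_add_le' c5 b6
  have c7 := abs_add_le' c6 b7
  have c8 := abs_add_le' c7 b8
  have c9 := abs_add_le' c8 b9
  have c10 := abs_add_le' c9 b10
  have c11 := abs_add_le' c10 b11
  have c12 := abs_add_le' c11 b12
  have c13 := abs_add_le' c12 b13
  -- final comparison
  rw [Real.norm_eq_abs, Real.norm_eq_abs, hid]
  rw [abs_of_pos hh0, abs_of_pos hτ0, abs_of_nonneg (show (0:ℝ) ≤ (h + τ) ^ 3 by positivity)]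
  have h14AM : (0:ℝ) ≤ 14 * A * M :=
    mul_nonneg (mul_nonneg (by norm_num) hA0.le) hM0
  calc |T + (-(s / h)) * q1 + (s / (2 * h) * α) * q2 + (s / (2 * h) * (1 - α)) * q1 +
        (-(s / (2 * h) * α)) * q3 + (-(s / (2 * h) * (1 - α))) * q4 +
        s * r1 + (-(s * α / 2)) * r2 + (-(s * (1 - α) / 2)) * r1 + (s * (1 - α) / 2) * r3 +
        (-(s * h / 2)) * w1 + (s * h * α / 4) * w2 + (s * h * (1 - α) / 4) * w1 +
        (-(s * h * (1 - α) / 4)) * w3|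
      ≤ A * (M * (s * (h + s) ^ 2)) +
        A * (M * (s * (h + s) ^ 2)) +
        A * (M * (s * (h + s) ^ 2)) +
        A * (M * (s * (h + s) ^ 2)) +
        A * (M * (s * (h + s) ^ 2)) +
        A * (M * (s * (h + s) ^ 2)) +
        A * (M * (s * (h + s) ^ 2)) +
        A * (M * (s * (h + s) ^ 2)) +
        A * (M * (s * (h + s) ^ 2)) +
        A * (M * (s * (h + s) ^ 2)) +
        A * (M * (s * (h + s) ^ 2)) +
        A * (M * (s * (h + s) ^ 2)) +
        A * (M * (s * (h + s) ^ 2)) +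
        A * (M * (s * (h + s) ^ 2)) := c13
    _ = 14 * A * M * (s * (h + s) ^ 2) := by ring
    _ ≤ 14 * A * M * (v * (1 + v) ^ 2 * (h + τ) ^ 3) := mul_le_mul_of_nonneg_left hkeyineq h14AM
    _ = c * (h + τ) ^ 3 := by rw [hc_def]; ring
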